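/- An orientation O of the k-dimensional hypercube is a unique sink orientation if and only if for every pair of distinct vertices v, w there exists a coordinate i with v_i ≠ w_i and O(v)_i = O(w)_i. -/

import Mathlib

/-- The neighbor of `v` across the `i`-edge. -/
def flipV {k : ℕ} (v : Fin k → Bool) (i : Fin k) : Fin k → Bool :=
  Function.update v i (!(v i))

/-- `v` belongs to the face described by `f ∈ {0,1,*}^k` (`none` = `*`). -/
def inFace {k : ℕ} (f : Fin k → Option Bool) (v : Fin k → Bool) : Prop :=
  ∀ i : Fin k, ∀ b : Bool, f i = some b → v i = b

/-- `v` is a sink of the face `f` under the orientation `O`: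
all edges of the face incident to `v` are directed toward `v`.
(`O v i = v i` means the `i`-edge at `v` is incoming.) -/
def isSinkOf {k : ℕ} (O : (Fin k → Bool) → (Fin k → Bool))
    (f : Fin k → Option Bool) (v : Fin k → Bool) : Prop :=
  inFace f v ∧ ∀ i : Fin k, f i = none → O v i = v i

section Aux

variable {k : ℕ}

/-- Abbreviation: `O` is a unique sink orientation. -/
def IsUSO (O : (Fin k → Bool) → (Fin k → Bool)) : Prop :=
  ∀ f : Fin k → Option Bool, ∃! v : Fin k → Bool, isSinkOf O f v

lemma sink_congr {O O' : (Fin k → Bool) → (Fin k → Bool)} {f : Fin k → Option Bool}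
    (h : ∀ v i, f i = none → O v i = O' v i) (v : Fin k → Bool) :
    isSinkOf O f v ↔ isSinkOf O' f v := by
  constructor <;> rintro ⟨h1, h2⟩ <;> refine ⟨h1, fun i hi => ?_⟩
  · rw [← h v i hi]; exact h2 i hi
  · rw [h v i hi]; exact h2 i hi

lemma existsUnique_congr' {O O' : (Fin k → Bool) → (Fin k → Bool)}
    {f : Fin k → Option Bool}
    (h : ∀ v, isSinkOf O f v ↔ isSinkOf O' f v)
    (hu : ∃! v, isSinkOf O f v) : ∃! v, isSinkOf O' f v := by
  obtain ⟨u, hu1, hu2⟩ := hu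
  exact ⟨u, (h u).1 hu1, fun y hy => hu2 y ((h y).2 hy)⟩

lemma existsUnique_iff_form {P : (Fin k → Bool) → Prop}
    (h : ∃! v, P v) : ∃ u, ∀ v, P v ↔ v = u := by
  obtain ⟨u, h1, h2⟩ := h
  exact ⟨u, fun v => ⟨fun hv => h2 v hv, fun e => e ▸ h1⟩⟩

/-- A sink of a face `f` with free coordinate `j` is a sink of the half-face
where `j` is fixed to its own value, with the `j`-edge incoming. -/
lemma sink_split {O : (Fin k → Bool) → (Fin k → Bool)} {f : Fin k → Option Bool}
    {j : Fin k} (hj : f j = none) (v : Fin k → Bool) :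
    isSinkOf O f v ↔
      isSinkOf O (Function.update f j (some (v j))) v ∧ O v j = v j := by
  constructor
  · rintro ⟨h1, h2⟩
    refine ⟨⟨fun i b hib => ?_, fun i hi => ?_⟩, h2 j hj⟩
    · by_cases hij : i = j
      · subst hij
        rw [Function.update_self] at hib
        exact Option.some_inj.mp hib
      · rw [Function.update_of_ne hij] at hib
        exact h1 i b hib
    · by_cases hij : i = j
      · subst hij; simp at hi
      · rw [Function.update_of_ne hij] at hi
        exact h2 i hi
  · rintro ⟨⟨h1, h2⟩, h3⟩
    refine ⟨fun i b hib => ?_, fun i hi => ?_⟩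
    · have hij : i ≠ j := fun e => by rw [e, hj] at hib; exact nomatch hib
      exact h1 i b (by rw [Function.update_of_ne hij]; exact hib)
    · by_cases hij : i = j
      · subst hij; exact h3
      · exact h2 i (by rw [Function.update_of_ne hij]; exact hi)

lemma u0_val {O : (Fin k → Bool) → (Fin k → Bool)} {f : Fin k → Option Bool}
    {j : Fin k} {b : Bool} {u : Fin k → Bool}
    (h : ∀ v, isSinkOf O (Function.update f j (some b)) v ↔ v = u) : u j = b := by
  have := ((h u).2 rfl).1 j b (by rw [Function.update_self])
  exact this

/-- If the two halves of a face `f` (free at `j`) have unique sinks `u0`, `u1`,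
and the `j`-edges at `u0` and `u1` point the same absolute way,
then `f` has a unique sink. -/
lemma split_exists {O : (Fin k → Bool) → (Fin k → Bool)} {f : Fin k → Option Bool}
    {j : Fin k} (hj : f j = none) {u0 u1 : Fin k → Bool}
    (h0 : ∀ v, isSinkOf O (Function.update f j (some false)) v ↔ v = u0)
    (h1 : ∀ v, isSinkOf O (Function.update f j (some true)) v ↔ v = u1)
    (ha : O u0 j = O u1 j) :
    ∃! v, isSinkOf O f v := by
  have hu0j : u0 j = false := u0_val h0
  have hu1j : u1 j = true := u0_val h1
  cases hb : O u0 j with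
  | false =>
    refine ⟨u0, ?_, ?_⟩
    · show isSinkOf O f u0
      rw [sink_split hj]
      refine ⟨?_, by rw [hb, hu0j]⟩
      rw [hu0j]; exact (h0 u0).2 rfl
    · intro y hy
      have hy' : isSinkOf O f y := hy
      rw [sink_split hj] at hy'
      obtain ⟨hy1, hy2⟩ := hy'
      cases hyj : y j with
      | false => rw [hyj] at hy1; exact (h0 y).1 hy1
      | true =>
        rw [hyj] at hy1
        have := (h1 y).1 hy1
        subst this
        rw [hyj] at hy2
        rw [← ha, hb] at hy2
        exact absurd hy2 (by simp)
  | true =>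
    refine ⟨u1, ?_, ?_⟩
    · show isSinkOf O f u1
      rw [sink_split hj]
      refine ⟨?_, by rw [← ha, hb, hu1j]⟩
      rw [hu1j]; exact (h1 u1).2 rfl
    · intro y hy
      have hy' : isSinkOf O f y := hy
      rw [sink_split hj] at hy'
      obtain ⟨hy1, hy2⟩ := hy'
      cases hyj : y j with
      | true => rw [hyj] at hy1; exact (h1 y).1 hy1
      | false =>
        rw [hyj] at hy1
        have := (h0 y).1 hy1
        subst this
        rw [hyj] at hy2
        rw [hb] at hy2
        exact absurd hy2 (by simp)

/-- In a USO, the `j`-edges at the sinks of the two halves of a face free at `j`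
point the same absolute way. -/
lemma split_agree {O : (Fin k → Bool) → (Fin k → Bool)} (hU : IsUSO O)
    {f : Fin k → Option Bool} {j : Fin k} (hj : f j = none) {u0 u1 : Fin k → Bool}
    (h0 : ∀ v, isSinkOf O (Function.update f j (some false)) v ↔ v = u0)
    (h1 : ∀ v, isSinkOf O (Function.update f j (some true)) v ↔ v = u1) :
    O u0 j = O u1 j := by
  have hu0j : u0 j = false := u0_val h0
  have hu1j : u1 j = true := u0_val h1
  obtain ⟨u, hu⟩ := existsUnique_iff_form (hU f)
  have husink := (hu u).2 rfl
  have hsplit := (sink_split hj u).1 husink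
  cases huj : u j with
  | false =>
    rw [huj] at hsplit
    have heq : u = u0 := (h0 u).1 hsplit.1
    have hOu0 : O u0 j = false := by
      rw [← heq]; exact hsplit.2
    rw [hOu0]
    by_contra hc
    have hOu1 : O u1 j = true := by
      cases h : O u1 j with
      | true => rfl
      | false => rw [h] at hc; exact absurd rfl hc
    -- then u1 is a sink of f, so u1 = u = u0, contradiction
    have : isSinkOf O f u1 := by
      rw [sink_split hj, hu1j]
      exact ⟨(h1 u1).2 rfl, by rw [hOu1]⟩
    have := (hu u1).1 this
    rw [this, heq] at hu1j
    rw [hu0j] at hu1j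
    exact Bool.noConfusion hu1j
  | true =>
    rw [huj] at hsplit
    have heq : u = u1 := (h1 u).1 hsplit.1
    have hOu1 : O u1 j = true := by
      rw [← heq]; exact hsplit.2
    rw [hOu1]
    by_contra hc
    have hOu0 : O u0 j = false := by
      cases h : O u0 j with
      | false => rfl
      | true => rw [h] at hc; exact absurd rfl hc
    have : isSinkOf O f u0 := by
      rw [sink_split hj, hu0j]
      exact ⟨(h0 u0).2 rfl, by rw [hOu0]⟩
    have := (hu u0).1 this
    rw [this, heq] at hu0j
    rw [hu1j] at hu0j
    exact Bool.noConfusion hu0j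

/-- Reversing all edges in direction `j`. -/
def flip1 (O : (Fin k → Bool) → (Fin k → Bool)) (j : Fin k) :
    (Fin k → Bool) → Fin k → Bool :=
  fun v i => if i = j then !(O v i) else O v i

lemma isUSO_flip1 {O : (Fin k → Bool) → (Fin k → Bool)} (hU : IsUSO O) (j : Fin k) :
    IsUSO (flip1 O j) := by
  intro f
  cases hj : f j with
  | some b =>
    refine existsUnique_congr' (fun v => sink_congr (fun v i hi => ?_) v) (hU f)
    have hij : i ≠ j := fun e => by rw [e, hj] at hi; exact nomatch hi
    simp [flip1, hij]
  | none =>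
    obtain ⟨u0, h0⟩ := existsUnique_iff_form (hU (Function.update f j (some false)))
    obtain ⟨u1, h1⟩ := existsUnique_iff_form (hU (Function.update f j (some true)))
    have ha := split_agree hU hj h0 h1
    have key : ∀ (b : Bool) (v : Fin k → Bool),
        isSinkOf (flip1 O j) (Function.update f j (some b)) v ↔
        isSinkOf O (Function.update f j (some b)) v := by
      intro b v
      refine sink_congr (fun v i hi => ?_) v
      have hij : i ≠ j := fun e => by
        rw [e, Function.update_self] at hi; exact nomatch hi
      simp [flip1, hij]
    refine split_exists hj (fun v => (key false v).trans (h0 v))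
      (fun v => (key true v).trans (h1 v)) ?_
    simp [flip1, ha]

/-- Reversing all edges in a set of directions. -/
def flipS (O : (Fin k → Bool) → (Fin k → Bool)) (s : Finset (Fin k)) :
    (Fin k → Bool) → Fin k → Bool :=
  fun v i => if i ∈ s then !(O v i) else O v i

lemma isUSO_flipS {O : (Fin k → Bool) → (Fin k → Bool)} (hU : IsUSO O)
    (s : Finset (Fin k)) : IsUSO (flipS O s) := by
  classical
  induction s using Finset.induction_on with
  | empty =>
    have : flipS O ∅ = O := by funext v i; simp [flipS]
    rw [this]; exact hU
  | @insert j s hjs ih =>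
    have : flipS O (insert j s) = flip1 (flipS O s) j := by
      funext v i
      by_cases h : i = j
      · subst h; simp [flipS, flip1, hjs]
      · simp [flipS, flip1, h]
    rw [this]
    exact isUSO_flip1 ih j

end Aux

/-- An orientation of the `k`-cube is a USO (every non-empty face has a unique sink)
iff the Szabó–Welzl condition holds. -/
theorem stmt0 (k : ℕ) (O : (Fin k → Bool) → (Fin k → Bool))
    (hO : ∀ (v : Fin k → Bool) (i : Fin k), O v i = O (flipV v i) i) :
    (∀ f : Fin k → Option Bool, ∃! v : Fin k → Bool, isSinkOf O f v) ↔
      (∀ v w : Fin k → Bool, v ≠ w → ∃ i : Fin k, v i ≠ w i ∧ O v i = O w i) := by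
  classical
  constructor
  · -- USO → Szabó–Welzl condition
    intro hU v w hvw
    by_contra hc
    push_neg at hc
    -- hc : ∀ i, v i ≠ w i → O v i ≠ O w i
    set f : Fin k → Option Bool := fun i => if v i = w i then some (v i) else none with hf
    set s : Finset (Fin k) :=
      Finset.univ.filter (fun i => ¬ v i = w i ∧ ¬ O v i = v i) with hs
    have hmem : ∀ i, i ∈ s ↔ (¬ v i = w i ∧ ¬ O v i = v i) := by
      intro i; simp [hs]
    have hU' : IsUSO (flipS O s) := isUSO_flipS hU s
    obtain ⟨u, hu⟩ := existsUnique_iff_form (hU' f)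
    have hvsink : isSinkOf (flipS O s) f v := by
      constructor
      · intro i b hib
        simp only [hf] at hib
        by_cases h : v i = w i
        · rw [if_pos h] at hib; exact Option.some_inj.mp hib
        · rw [if_neg h] at hib; exact nomatch hib
      · intro i hi
        simp only [hf] at hi
        have hne : ¬ v i = w i := by
          intro h; rw [if_pos h] at hi; exact nomatch hi
        by_cases hOv : O v i = v i
        · have : i ∉ s := by rw [hmem]; tauto
          simp [flipS, this, hOv]
        · have : i ∈ s := by rw [hmem]; exact ⟨hne, hOv⟩
          simp only [flipS, if_pos this]
          revert hOv
          cases O v i <;> cases v i <;> simp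
    have hwsink : isSinkOf (flipS O s) f w := by
      constructor
      · intro i b hib
        simp only [hf] at hib
        by_cases h : v i = w i
        · rw [if_pos h] at hib; rw [← h]; exact Option.some_inj.mp hib
        · rw [if_neg h] at hib; exact nomatch hib
      · intro i hi
        simp only [hf] at hi
        have hne : ¬ v i = w i := by
          intro h; rw [if_pos h] at hi; exact nomatch hi
        have hOne : ¬ O v i = O w i := hc i hne
        by_cases hOv : O v i = v i
        · have : i ∉ s := by rw [hmem]; tauto
          simp only [flipS, if_neg this]
          revert hne hOne hOv
          cases O v i <;> cases O w i <;> cases v i <;> cases w i <;> simp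
        · have : i ∈ s := by rw [hmem]; exact ⟨hne, hOv⟩
          simp only [flipS, if_pos this]
          revert hne hOne hOv
          cases O v i <;> cases O w i <;> cases v i <;> cases w i <;> simp
    exact hvw (((hu v).1 hvsink).trans ((hu w).1 hwsink).symm)
  · -- Szabó–Welzl condition → USO
    intro hC f
    -- uniqueness
    have uniq : ∀ y z, isSinkOf O f y → isSinkOf O f z → y = z := by
      intro y z hy hz
      by_contra hne
      obtain ⟨i, hnei, heq⟩ := hC y z hne
      have hfi : f i = none := by
        cases hfi : f i with
        | none => rfl
        | some b => exact absurd ((hy.1 i b hfi).trans (hz.1 i b hfi).symm) hnei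
      exact hnei (((hy.2 i hfi).symm.trans heq).trans (hz.2 i hfi))
    -- existence via injectivity of the outmap on the face
    let mem : ({i : Fin k // f i = none} → Bool) → (Fin k → Bool) :=
      fun g i => if h : f i = none then g ⟨i, h⟩ else (f i).getD false
    have hface : ∀ g, inFace f (mem g) := by
      intro g i b hb
      simp only [mem]
      rw [dif_neg (by rw [hb]; exact fun h => nomatch h), hb]
      rfl
    have hmemval : ∀ g (i : Fin k) (h : f i = none), mem g i = g ⟨i, h⟩ := by
      intro g i h
      simp only [mem]
      rw [dif_pos h]
    let Ψ : ({i : Fin k // f i = none} → Bool) → ({i : Fin k // f i = none} → Bool) :=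
      fun g i => xor (O (mem g) i.1) (mem g i.1)
    have hinj : Function.Injective Ψ := by
      intro g g' h
      by_contra hgg
      have hmne : mem g ≠ mem g' := by
        intro hm
        apply hgg
        funext i
        rw [← hmemval g i.1 i.2, ← hmemval g' i.1 i.2, hm]
      obtain ⟨i, hnei, heq⟩ := hC (mem g) (mem g') hmne
      have hfi : f i = none := by
        cases hfi : f i with
        | none => rfl
        | some b =>
          exact absurd ((hface g i b hfi).trans (hface g' i b hfi).symm) hnei
      have := congrFun h ⟨i, hfi⟩
      simp only [Ψ, heq] at this
      revert hnei this
      cases O (mem g') i <;> cases mem g i <;> cases mem g' i <;> simp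
    have hsurj : Function.Surjective Ψ := Finite.injective_iff_surjective.mp hinj
    obtain ⟨g, hg⟩ := hsurj (fun _ => false)
    refine ⟨mem g, ⟨hface g, fun i hfi => ?_⟩, fun y hy => uniq y (mem g) hy ?_⟩
    · have := congrFun hg ⟨i, hfi⟩
      simp only [Ψ] at this
      revert this
      cases O (mem g) i <;> cases mem g i <;> simp
    · refine ⟨hface g, fun i hfi => ?_⟩
      have := congrFun hg ⟨i, hfi⟩
      simp only [Ψ] at this
      revert this
      cases O (mem g) i <;> cases mem g i <;> simp
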